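/- Let d ≥ 3 be an integer such that both d and (d−1)/2 are odd, and let u ≠ v be two extreme points of Ξ. Then the closed segment [u,v] is an extreme subset of Ξ whose relative interior (the open segment between u and v) meets the hyperplane H_{d/2} if and only if u, v ∈ {0,1}^d, u and v differ in exactly one coordinate, and the coordinate sums of u and v are (d−1)/2 and (d+1)/2 in some order. -/

import Mathlib

open Set Pointwise

noncomputable section

variable (d : ℕ)

/-- The vertices of the hypercube `[0,1]^d`. -/
def cubeVerts : Set (Fin d → ℝ) := {x | ∀ i, x i = 0 ∨ x i = 1}

/-- The set `𝒞` of centers of the `(d-1)/2`-dimensional faces of `[0,1]^d`: points with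
exactly `(d-1)/2` coordinates equal to `1/2` and all remaining coordinates in `{0,1}`. -/
def centerSet : Set (Fin d → ℝ) :=
  {x | (∀ i, x i = 0 ∨ x i = 1/2 ∨ x i = 1) ∧ {i | x i = 1/2}.ncard = (d - 1) / 2}

/-- The slab `L` bounded by the hyperplanes `H_{(d-1)/2}` and `H_{(d+1)/2}`. -/
def slabL : Set (Fin d → ℝ) :=
  {x | ((d : ℝ) - 1) / 2 ≤ ∑ i, x i ∧ ∑ i, x i ≤ ((d : ℝ) + 1) / 2}

/-- The set `𝒱 = (𝒞 ∖ L) ∪ ({0,1}^d ∩ L)`. -/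
def vSet : Set (Fin d → ℝ) := (centerSet d \ slabL d) ∪ (cubeVerts d ∩ slabL d)

/-- The polytope `Ξ`, the convex hull of `𝒱`. -/
def Xi : Set (Fin d → ℝ) := convexHull ℝ (vSet d)

section Aux

variable {E : Type*} [AddCommGroup E] [Module ℝ E]

/-- Carrier lemma: if a center of mass of points of a convex set `A` lies in an extreme
subset `S` of `A`, then every point with nonzero weight lies in `S`. -/
lemma extreme_carrier {A S : Set E} (hA : Convex ℝ A) (hS : IsExtreme ℝ A S)
    {ι : Type*} (t : Finset ι) (w : ι → ℝ) (z : ι → E) :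
    (∀ i ∈ t, 0 ≤ w i) → 0 < ∑ i ∈ t, w i → (∀ i ∈ t, z i ∈ A) →
      t.centerMass w z ∈ S → ∀ i ∈ t, w i ≠ 0 → z i ∈ S := by
  classical
  induction t using Finset.induction_on with
  | empty => intro _ _ _ _ i hi; exact absurd hi (Finset.notMem_empty i)
  | @insert a t ha IH =>
    intro h0 hpos hz hx i hi hwi
    have h0' : ∀ j ∈ t, 0 ≤ w j := fun j hj => h0 j (Finset.mem_insert_of_mem hj)
    have hWnn : 0 ≤ ∑ j ∈ t, w j := Finset.sum_nonneg h0'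
    have hTa : ∑ j ∈ insert a t, w j = w a + ∑ j ∈ t, w j := Finset.sum_insert ha
    rcases eq_or_lt_of_le hWnn with hW0 | hWpos
    · -- all weights in t vanish
      have hall : ∀ j ∈ t, w j = 0 := by
        intro j hj
        exact (Finset.sum_eq_zero_iff_of_nonneg h0').1 hW0.symm j hj
      have hwa : w a ≠ 0 := by
        intro h
        rw [hTa, h, ← hW0] at hpos; simp at hpos
      have hxa : (insert a t).centerMass w z = z a := by
        rw [Finset.centerMass]
        rw [Finset.sum_insert ha, Finset.sum_insert ha, ← hW0, add_zero]
        rw [Finset.sum_eq_zero (fun j hj => by rw [hall j hj, zero_smul]), add_zero,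
          inv_smul_smul₀ hwa]
      rcases Finset.mem_insert.1 hi with rfl | hit
      · rw [hxa] at hx; exact hx
      · exact absurd (hall i hit) hwi
    · -- positive mass in t
      have hy : t.centerMass w z ∈ A := by
        rw [← hA.convexHull_eq]
        exact Finset.centerMass_mem_convexHull t h0' hWpos (fun j hj => hz j (Finset.mem_insert_of_mem hj))
      set W := ∑ j ∈ t, w j with hWdef
      set y := t.centerMass w z with hydef
      have hxeq : (insert a t).centerMass w z = (w a / (w a + W)) • z a + (W / (w a + W)) • y :=
        Finset.centerMass_insert _ _ _ ha (ne_of_gt hWpos)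
      have hT : 0 < w a + W := lt_of_lt_of_le hWpos (le_add_of_nonneg_left (h0 a (Finset.mem_insert_self a t)))
      have hyS : y ∈ S := by
        rcases eq_or_ne (w a) 0 with hwa | hwa
        · rw [hwa, zero_div, zero_smul, zero_add, zero_add, div_self (ne_of_gt hWpos), one_smul] at hxeq
          rw [← hxeq]; exact hx
        · have hwapos : 0 < w a := lt_of_le_of_ne (h0 a (Finset.mem_insert_self a t)) (Ne.symm hwa)
          rcases eq_or_ne (z a) y with hzy | hzy
          · rw [hzy, ← add_smul, ← add_div, div_self (ne_of_gt hT), one_smul] at hxeq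
            rw [← hxeq]; exact hx
          · have hmem : (insert a t).centerMass w z ∈ openSegment ℝ (z a) y :=
              ⟨w a / (w a + W), W / (w a + W), div_pos hwapos hT, div_pos hWpos hT,
                by field_simp, hxeq.symm⟩
            exact hS.right_mem_of_mem_openSegment (hz a (Finset.mem_insert_self a t)) hy hx hmem
      rcases Finset.mem_insert.1 hi with rfl | hit
      · rcases eq_or_ne (z i) y with hzy | hzy
        · rw [hzy]; exact hyS
        · have hwapos : 0 < w i := lt_of_le_of_ne (h0 i (Finset.mem_insert_self i t)) (Ne.symm hwi)
          have hmem : (insert i t).centerMass w z ∈ openSegment ℝ (z i) y :=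
            ⟨w i / (w i + W), W / (w i + W), div_pos hwapos hT, div_pos hWpos hT,
              by field_simp, hxeq.symm⟩
          exact hS.left_mem_of_mem_openSegment (hz i (Finset.mem_insert_self i t)) hy hx hmem
      · exact IH h0' hWpos (fun j hj => hz j (Finset.mem_insert_of_mem hj)) hyS i hit hwi

/-- If a linear functional is bounded by `c` on `s` and `x ∈ convexHull s` attains `c`,
then `x` is in the convex hull of the points of `s` attaining `c`. -/
lemma argmax_face {s : Set E} (f : E →ₗ[ℝ] ℝ) (c : ℝ) (hb : ∀ w ∈ s, f w ≤ c)
    {x : E} (hx : x ∈ convexHull ℝ s) (hfx : f x = c) :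
    x ∈ convexHull ℝ {w ∈ s | f w = c} := by
  classical
  rw [convexHull_eq] at hx
  obtain ⟨ι, t, w, z, h0, h1, hz, hxeq⟩ := hx
  have hmass : t.centerMass w z = ∑ i ∈ t, w i • z i := Finset.centerMass_eq_of_sum_1 _ _ h1
  have hfz : ∀ i ∈ t, w i * (c - f (z i)) ≥ 0 := fun i hi =>
    mul_nonneg (h0 i hi) (sub_nonneg.2 (hb _ (hz i hi)))
  have hsum0 : ∑ i ∈ t, w i * (c - f (z i)) = 0 := by
    have : f x = ∑ i ∈ t, w i * f (z i) := by
      rw [← hxeq, hmass, map_sum]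
      exact Finset.sum_congr rfl fun i _ => by rw [map_smul, smul_eq_mul]
    have hc : ∑ i ∈ t, w i * c = c := by rw [← Finset.sum_mul, h1, one_mul]
    calc ∑ i ∈ t, w i * (c - f (z i)) = (∑ i ∈ t, w i * c) - ∑ i ∈ t, w i * f (z i) := by
          rw [← Finset.sum_sub_distrib]; exact Finset.sum_congr rfl fun i _ => by ring
      _ = c - f x := by rw [hc, this]
      _ = 0 := by rw [hfx, sub_self]
  have hkey : ∀ i ∈ t, w i ≠ 0 → f (z i) = c := by
    intro i hi hwi
    have := (Finset.sum_eq_zero_iff_of_nonneg (fun i hi => hfz i hi)).1 hsum0 i hi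
    rcases mul_eq_zero.1 this with h | h
    · exact absurd h hwi
    · linarith [sub_eq_zero.1 h]
  rw [← hxeq, ← Finset.centerMass_filter_ne_zero]
  refine Finset.centerMass_mem_convexHull _ (fun i hi => h0 i (Finset.mem_filter.1 hi).1) ?_ ?_
  · rw [Finset.sum_filter_ne_zero, h1]; norm_num
  · intro i hi
    rw [Finset.mem_filter] at hi
    exact ⟨hz i hi.1, hkey i hi.1 hi.2⟩

end Aux
section Slab
variable {d}

lemma sum_ite_two {i j : Fin d} (hij : i ≠ j) (a b : ℝ) (x : Fin d → ℝ) :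
    ∑ t, (if t = i then a else if t = j then b else x t) =
      ∑ t, x t + (a - x i) + (b - x j) := by
  have key : ∀ t, (if t = i then a else if t = j then b else x t) =
      x t + (if t = i then a - x i else 0) + (if t = j then b - x j else 0) := by
    intro t
    by_cases h1 : t = i
    · by_cases h2 : t = j
      · exact absurd (h1.symm.trans h2) hij
      · simp only [if_pos h1, if_neg h2]; rw [h1]; ring
    · by_cases h2 : t = j
      · simp only [if_neg h1, if_pos h2]; rw [h2]; ring
      · simp only [if_neg h1, if_neg h2]; ring
  rw [Finset.sum_congr rfl (fun t _ => key t)]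
  rw [Finset.sum_add_distrib, Finset.sum_add_distrib]
  simp

lemma sum_ite_one (i : Fin d) (a : ℝ) (x : Fin d → ℝ) :
    ∑ t, (if t = i then a else x t) = ∑ t, x t + (a - x i) := by
  have key : ∀ t, (if t = i then a else x t) = x t + (if t = i then a - x i else 0) := by
    intro t
    by_cases h1 : t = i
    · simp only [if_pos h1]; rw [h1]; ring
    · simp only [if_neg h1]; ring
  rw [Finset.sum_congr rfl (fun t _ => key t), Finset.sum_add_distrib]
  simp

lemma mem_slab_hull_aux {e : ℕ} (hde : d = 2 * e + 1) :
    ∀ (n : ℕ) (x : Fin d → ℝ),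
      (Finset.univ.filter fun i => x i ≠ 0 ∧ x i ≠ 1).card ≤ n →
      (∀ i, 0 ≤ x i ∧ x i ≤ 1) → (e : ℝ) ≤ ∑ i, x i → ∑ i, x i ≤ (e : ℝ) + 1 →
      x ∈ convexHull ℝ (cubeVerts d ∩ slabL d) := by
  classical
  have hdcast : (d : ℝ) = 2 * (e : ℝ) + 1 := by exact_mod_cast congrArg (Nat.cast : ℕ → ℝ) hde
  have hdr : ((d : ℝ) - 1) / 2 = (e : ℝ) := by rw [hdcast]; ring
  have hdr' : ((d : ℝ) + 1) / 2 = (e : ℝ) + 1 := by rw [hdcast]; ring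
  intro n
  induction n with
  | zero =>
    intro x hcard hbd hlo hhi
    have hemp : (Finset.univ.filter fun i => x i ≠ 0 ∧ x i ≠ 1) = ∅ :=
      Finset.card_eq_zero.1 (Nat.le_zero.1 hcard)
    have hfrac : ∀ i, x i = 0 ∨ x i = 1 := by
      intro i
      by_contra h
      push_neg at h
      have hmem : i ∈ Finset.univ.filter fun i => x i ≠ 0 ∧ x i ≠ 1 :=
        Finset.mem_filter.2 ⟨Finset.mem_univ i, h⟩
      rw [hemp] at hmem
      exact absurd hmem (Finset.notMem_empty i)
    exact subset_convexHull ℝ _ ⟨hfrac, ⟨by rw [hdr]; exact hlo, by rw [hdr']; exact hhi⟩⟩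
  | succ n IH =>
    intro x hcard hbd hlo hhi
    by_cases hle : (Finset.univ.filter fun i => x i ≠ 0 ∧ x i ≠ 1).card ≤ n
    · exact IH x hle hbd hlo hhi
    · have hpos : 0 < (Finset.univ.filter fun i => x i ≠ 0 ∧ x i ≠ 1).card := by omega
      obtain ⟨i, hi⟩ := Finset.card_pos.1 hpos
      have hi' := Finset.mem_filter.1 hi
      have hxi0 : 0 < x i := lt_of_le_of_ne (hbd i).1 (Ne.symm hi'.2.1)
      have hxi1 : x i < 1 := lt_of_le_of_ne (hbd i).2 hi'.2.2
      by_cases hexj : ∃ j ∈ Finset.univ.filter (fun s => x s ≠ 0 ∧ x s ≠ 1), j ≠ i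
      · -- two fractional coordinates: move mass between them
        obtain ⟨j, hj, hji⟩ := hexj
        have hj' := Finset.mem_filter.1 hj
        have hxj0 : 0 < x j := lt_of_le_of_ne (hbd j).1 (Ne.symm hj'.2.1)
        have hxj1 : x j < 1 := lt_of_le_of_ne (hbd j).2 hj'.2.2
        have hij : i ≠ j := Ne.symm hji
        set δ1 := min (1 - x i) (x j) with hδ1
        set δ2 := min (x i) (1 - x j) with hδ2
        have hδ1pos : 0 < δ1 := lt_min (by linarith) hxj0
        have hδ2pos : 0 < δ2 := lt_min hxi0 (by linarith)
        have hδ1a : δ1 ≤ 1 - x i := min_le_left _ _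
        have hδ1b : δ1 ≤ x j := min_le_right _ _
        have hδ2a : δ2 ≤ x i := min_le_left _ _
        have hδ2b : δ2 ≤ 1 - x j := min_le_right _ _
        set p : Fin d → ℝ :=
          fun t => if t = i then x i + δ1 else if t = j then x j - δ1 else x t with hp
        set q : Fin d → ℝ :=
          fun t => if t = i then x i - δ2 else if t = j then x j + δ2 else x t with hq
        have hsp : ∑ t, p t = ∑ t, x t := by rw [hp]; rw [sum_ite_two hij]; ring
        have hsq : ∑ t, q t = ∑ t, x t := by rw [hq]; rw [sum_ite_two hij]; ring
        have hbp : ∀ t, 0 ≤ p t ∧ p t ≤ 1 := by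
          intro t
          simp only [hp]
          split_ifs with h1 h2
          · constructor <;> linarith
          · constructor <;> linarith
          · exact hbd t
        have hbq : ∀ t, 0 ≤ q t ∧ q t ≤ 1 := by
          intro t
          simp only [hq]
          split_ifs with h1 h2
          · constructor <;> linarith
          · constructor <;> linarith
          · exact hbd t
        have hcardx : (Finset.univ.filter fun s => x s ≠ 0 ∧ x s ≠ 1).card = n + 1 := by omega
        -- generic: membership in the fractional set of x
        have hmemx : ∀ (y : Fin d → ℝ), (∀ t, t ≠ i → t ≠ j → y t = x t) →
            ∀ t, y t ≠ 0 → y t ≠ 1 → t ∈ Finset.univ.filter fun s => x s ≠ 0 ∧ x s ≠ 1 := by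
          intro y hy t h0' h1'
          by_cases h1 : t = i
          · exact h1 ▸ hi
          · by_cases h2 : t = j
            · exact h2 ▸ hj
            · refine Finset.mem_filter.2 ⟨Finset.mem_univ t, ?_, ?_⟩
              · rw [← hy t h1 h2]; exact h0'
              · rw [← hy t h1 h2]; exact h1'
        have hoffp : ∀ t, t ≠ i → t ≠ j → p t = x t := by
          intro t h1 h2; simp only [hp]; rw [if_neg h1, if_neg h2]
        have hoffq : ∀ t, t ≠ i → t ≠ j → q t = x t := by
          intro t h1 h2; simp only [hq]; rw [if_neg h1, if_neg h2]
        have hcard_of : ∀ (y : Fin d → ℝ), (∀ t, t ≠ i → t ≠ j → y t = x t) →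
            ∀ k, k ∈ (Finset.univ.filter fun s => x s ≠ 0 ∧ x s ≠ 1) →
            (y k = 0 ∨ y k = 1) →
            (Finset.univ.filter fun t => y t ≠ 0 ∧ y t ≠ 1).card ≤ n := by
          intro y hy k hk hyk
          have hsub : (Finset.univ.filter fun t => y t ≠ 0 ∧ y t ≠ 1) ⊆
              (Finset.univ.filter fun s => x s ≠ 0 ∧ x s ≠ 1).erase k := by
            intro t ht
            have ht' := Finset.mem_filter.1 ht
            refine Finset.mem_erase.2 ⟨?_, hmemx y hy t ht'.2.1 ht'.2.2⟩
            rintro rfl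
            rcases hyk with h | h
            · exact ht'.2.1 h
            · exact ht'.2.2 h
          calc (Finset.univ.filter fun t => y t ≠ 0 ∧ y t ≠ 1).card
              ≤ ((Finset.univ.filter fun s => x s ≠ 0 ∧ x s ≠ 1).erase k).card :=
                Finset.card_le_card hsub
            _ = (Finset.univ.filter fun s => x s ≠ 0 ∧ x s ≠ 1).card - 1 :=
                Finset.card_erase_of_mem hk
            _ ≤ n := by omega
        have hcardp : (Finset.univ.filter fun t => p t ≠ 0 ∧ p t ≠ 1).card ≤ n := by
          rcases min_cases (1 - x i) (x j) with ⟨hmin, _⟩ | ⟨hmin, _⟩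
          · refine hcard_of p hoffp i hi (Or.inr ?_)
            have hpi : p i = x i + δ1 := by simp [hp]
            rw [hpi, hδ1, hmin]; ring
          · refine hcard_of p hoffp j hj (Or.inl ?_)
            have hpj : p j = x j - δ1 := by simp [hp, Ne.symm hij]
            rw [hpj, hδ1, hmin]; ring
        have hcardq : (Finset.univ.filter fun t => q t ≠ 0 ∧ q t ≠ 1).card ≤ n := by
          rcases min_cases (x i) (1 - x j) with ⟨hmin, _⟩ | ⟨hmin, _⟩
          · refine hcard_of q hoffq i hi (Or.inl ?_)
            have hqi : q i = x i - δ2 := by simp [hq]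
            rw [hqi, hδ2, hmin]; ring
          · refine hcard_of q hoffq j hj (Or.inr ?_)
            have hqj : q j = x j + δ2 := by simp [hq, Ne.symm hij]
            rw [hqj, hδ2, hmin]; ring
        have hpmem : p ∈ convexHull ℝ (cubeVerts d ∩ slabL d) :=
          IH p hcardp hbp (by rw [hsp]; exact hlo) (by rw [hsp]; exact hhi)
        have hqmem : q ∈ convexHull ℝ (cubeVerts d ∩ slabL d) :=
          IH q hcardq hbq (by rw [hsq]; exact hlo) (by rw [hsq]; exact hhi)
        have hS : 0 < δ1 + δ2 := by linarith
        have hxseg : x ∈ segment ℝ p q := by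
          refine ⟨δ2 / (δ1 + δ2), δ1 / (δ1 + δ2), le_of_lt (div_pos hδ2pos hS),
            le_of_lt (div_pos hδ1pos hS), by field_simp; ring, ?_⟩
          funext t
          simp only [Pi.add_apply, Pi.smul_apply, smul_eq_mul, hp, hq]
          split_ifs with h1 h2
          · rw [h1]; field_simp; ring
          · rw [h2]; field_simp; ring
          · field_simp; ring
        exact (convex_convexHull ℝ _).segment_subset hpmem hqmem hxseg
      · -- exactly one fractional coordinate
        push_neg at hexj
        have hint : ∀ t, t ≠ i → x t = 0 ∨ x t = 1 := by
          intro t hti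
          by_contra h
          push_neg at h
          exact hti (hexj t (Finset.mem_filter.2 ⟨Finset.mem_univ t, h⟩))
        set c := ((Finset.univ.erase i).filter fun t => x t = 1).card with hc
        have hsplit : ∑ t, x t = x i + (c : ℝ) := by
          rw [← Finset.add_sum_erase _ _ (Finset.mem_univ i)]
          congr 1
          have hcongr : ∀ t ∈ Finset.univ.erase i, x t = if x t = 1 then (1 : ℝ) else 0 := by
            intro t ht
            rcases hint t (Finset.mem_erase.1 ht).1 with h | h
            · rw [h]; norm_num
            · rw [h]; norm_num
          rw [Finset.sum_congr rfl hcongr, Finset.sum_boole, hc]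
        have hcge : e ≤ c := by
          have h1 : (e : ℝ) < (c : ℝ) + 1 := by linarith
          have : e < c + 1 := by exact_mod_cast h1
          omega
        have hcle : c ≤ e := by
          have h1 : (c : ℝ) < (e : ℝ) + 1 := by linarith
          have : c < e + 1 := by exact_mod_cast h1
          omega
        have hce : (c : ℝ) = (e : ℝ) := by exact_mod_cast le_antisymm hcle hcge
        set p : Fin d → ℝ := fun t => if t = i then (1 : ℝ) else x t with hp
        set q : Fin d → ℝ := fun t => if t = i then (0 : ℝ) else x t with hq
        have hsp : ∑ t, p t = (e : ℝ) + 1 := by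
          rw [hp, sum_ite_one, hsplit, hce]; ring
        have hsq : ∑ t, q t = (e : ℝ) := by
          rw [hq, sum_ite_one, hsplit, hce]; ring
        have hbp : ∀ t, 0 ≤ p t ∧ p t ≤ 1 := by
          intro t; simp only [hp]; split_ifs
          · norm_num
          · exact hbd t
        have hbq : ∀ t, 0 ≤ q t ∧ q t ≤ 1 := by
          intro t; simp only [hq]; split_ifs
          · norm_num
          · exact hbd t
        have hcardp : (Finset.univ.filter fun t => p t ≠ 0 ∧ p t ≠ 1).card ≤ n := by
          have : (Finset.univ.filter fun t => p t ≠ 0 ∧ p t ≠ 1) = ∅ := by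
            rw [Finset.eq_empty_iff_forall_notMem]
            intro t ht
            have ht' := Finset.mem_filter.1 ht
            by_cases h1 : t = i
            · apply ht'.2.2; simp only [hp]; rw [if_pos h1]
            · rcases hint t h1 with h | h
              · apply ht'.2.1; simp only [hp]; rw [if_neg h1]; exact h
              · apply ht'.2.2; simp only [hp]; rw [if_neg h1]; exact h
          rw [this]; simp
        have hcardq : (Finset.univ.filter fun t => q t ≠ 0 ∧ q t ≠ 1).card ≤ n := by
          have : (Finset.univ.filter fun t => q t ≠ 0 ∧ q t ≠ 1) = ∅ := by
            rw [Finset.eq_empty_iff_forall_notMem]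
            intro t ht
            have ht' := Finset.mem_filter.1 ht
            by_cases h1 : t = i
            · apply ht'.2.1; simp only [hq]; rw [if_pos h1]
            · rcases hint t h1 with h | h
              · apply ht'.2.1; simp only [hq]; rw [if_neg h1]; exact h
              · apply ht'.2.2; simp only [hq]; rw [if_neg h1]; exact h
          rw [this]; simp
        have hpmem : p ∈ convexHull ℝ (cubeVerts d ∩ slabL d) :=
          IH p hcardp hbp (by rw [hsp]; linarith) (by rw [hsp])
        have hqmem : q ∈ convexHull ℝ (cubeVerts d ∩ slabL d) :=
          IH q hcardq hbq (by rw [hsq]) (by rw [hsq]; linarith)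
        have hxseg : x ∈ segment ℝ q p := by
          refine ⟨1 - x i, x i, by linarith, le_of_lt hxi0, by ring, ?_⟩
          funext t
          simp only [Pi.add_apply, Pi.smul_apply, smul_eq_mul, hp, hq]
          split_ifs with h1
          · rw [h1]; ring
          · ring
        exact (convex_convexHull ℝ _).segment_subset hqmem hpmem hxseg
end Slab

section Main
variable {d : ℕ}

lemma vSet_coords' {w : Fin d → ℝ} (hw : w ∈ vSet d) :
    ∀ i, w i = 0 ∨ w i = 1/2 ∨ w i = 1 := by
  rcases hw with ⟨hc, _⟩ | ⟨hc, _⟩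
  · exact hc.1
  · intro i
    rcases hc i with h | h
    · exact Or.inl h
    · exact Or.inr (Or.inr h)

lemma vSet_bounds {w : Fin d → ℝ} (hw : w ∈ vSet d) : ∀ i, 0 ≤ w i ∧ w i ≤ 1 := by
  intro i
  rcases vSet_coords' hw i with h | h | h <;> rw [h] <;> norm_num

lemma sum_eq_card {u : Fin d → ℝ} (hu : ∀ i, u i = 0 ∨ u i = 1) :
    ∑ i, u i = ((Finset.univ.filter fun i => u i = 1).card : ℝ) := by
  classical
  rw [← Finset.sum_boole]
  refine Finset.sum_congr rfl fun i _ => ?_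
  rcases hu i with h | h <;> rw [h] <;> norm_num

lemma cast_lo {e : ℕ} (hde : d = 2 * e + 1) : ((d : ℝ) - 1) / 2 = (e : ℝ) := by
  have : (d : ℝ) = 2 * (e : ℝ) + 1 := by exact_mod_cast congrArg (Nat.cast : ℕ → ℝ) hde
  rw [this]; ring

lemma cast_hi {e : ℕ} (hde : d = 2 * e + 1) : ((d : ℝ) + 1) / 2 = (e : ℝ) + 1 := by
  have : (d : ℝ) = 2 * (e : ℝ) + 1 := by exact_mod_cast congrArg (Nat.cast : ℕ → ℝ) hde
  rw [this]; ring

lemma cast_half {e : ℕ} (hde : d = 2 * e + 1) : (d : ℝ) / 2 = (e : ℝ) + 1/2 := by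
  have : (d : ℝ) = 2 * (e : ℝ) + 1 := by exact_mod_cast congrArg (Nat.cast : ℕ → ℝ) hde
  rw [this]; ring

lemma cube_slab_sum {e : ℕ} (hde : d = 2 * e + 1) {w : Fin d → ℝ}
    (hw : w ∈ cubeVerts d ∩ slabL d) :
    ∑ i, w i = (e : ℝ) ∨ ∑ i, w i = (e : ℝ) + 1 := by
  classical
  obtain ⟨hc, hlo, hhi⟩ := hw
  set c := (Finset.univ.filter fun i => w i = 1).card with hcd
  have hs : ∑ i, w i = (c : ℝ) := sum_eq_card hc
  rw [cast_lo hde, hs] at hlo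
  rw [cast_hi hde, hs] at hhi
  have h1 : e ≤ c := by exact_mod_cast hlo
  have h2 : c ≤ e + 1 := by exact_mod_cast hhi
  have : c = e ∨ c = e + 1 := by omega
  rcases this with h | h <;> rw [hs, h]
  · exact Or.inl rfl
  · right; push_cast; ring

lemma vSet_levels {e : ℕ} (hde : d = 2 * e + 1) {w : Fin d → ℝ} (hw : w ∈ vSet d) :
    ∑ i, w i ≤ (e : ℝ) ∨ (e : ℝ) + 1 ≤ ∑ i, w i := by
  rcases hw with ⟨_, hL⟩ | hL
  · rcases le_or_gt (((d : ℝ) - 1) / 2) (∑ i, w i) with h | h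
    · right
      have : ¬ (∑ i, w i ≤ ((d : ℝ) + 1) / 2) := fun h' => hL ⟨h, h'⟩
      rw [cast_hi hde] at this
      linarith [not_le.1 this]
    · left
      rw [cast_lo hde] at h
      linarith
  · rcases cube_slab_sum hde hL with h | h
    · exact Or.inl (le_of_eq h)
    · exact Or.inr (ge_of_eq h)

lemma vSet_sum_ne_half {e : ℕ} (hde : d = 2 * e + 1) {w : Fin d → ℝ} (hw : w ∈ vSet d) :
    ∑ i, w i ≠ (d : ℝ) / 2 := by
  rw [cast_half hde]
  rcases vSet_levels hde hw with h | h <;> intro hc <;> rw [hc] at h <;> linarith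

lemma Xi_bounds {x : Fin d → ℝ} (hx : x ∈ Xi d) : ∀ i, 0 ≤ x i ∧ x i ≤ 1 := by
  have hsub : Xi d ⊆ Set.univ.pi (fun _ : Fin d => Set.Icc (0:ℝ) 1) := by
    apply convexHull_min
    · intro w hw
      rw [Set.mem_univ_pi]
      intro i
      exact ⟨(vSet_bounds hw i).1, (vSet_bounds hw i).2⟩
    · exact convex_pi fun i _ => convex_Icc 0 1
  intro i
  have h := hsub hx
  rw [Set.mem_univ_pi] at h
  exact ⟨(h i).1, (h i).2⟩

lemma cube_slab_subset_Xi : convexHull ℝ (cubeVerts d ∩ slabL d) ⊆ Xi d :=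
  convexHull_mono Set.subset_union_right

lemma sum_smul_add {a b : ℝ} {u v : Fin d → ℝ} :
    ∑ i, (a • u + b • v) i = a * ∑ i, u i + b * ∑ i, v i := by
  simp [Finset.sum_add_distrib, Finset.mul_sum]

/-- A point of an extreme segment of `Ξ` lying at an extreme level of the slab is a vertex
of the cube. -/
lemma level_point_is_vertex {e : ℕ} (hde : d = 2 * e + 1) {u v : Fin d → ℝ}
    (hext : IsExtreme ℝ (Xi d) (segment ℝ u v))
    {y : Fin d → ℝ} (hy : y ∈ segment ℝ u v)
    (huniq : ∀ z ∈ segment ℝ u v, ∑ i, z i = ∑ i, y i → z = y)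
    (hcase : ∑ i, y i = (e : ℝ) ∨ ∑ i, y i = (e : ℝ) + 1) :
    y ∈ cubeVerts d := by
  classical
  have hyΞ : y ∈ Xi d := hext.1 hy
  have hbd := Xi_bounds hyΞ
  have hylo : (e : ℝ) ≤ ∑ i, y i := by rcases hcase with h | h <;> rw [h] <;> linarith
  have hyhi : ∑ i, y i ≤ (e : ℝ) + 1 := by rcases hcase with h | h <;> rw [h] <;> linarith
  have hyhull : y ∈ convexHull ℝ (cubeVerts d ∩ slabL d) :=
    mem_slab_hull_aux hde d y (le_trans (Finset.card_filter_le _ _)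
      (le_of_eq (Finset.card_univ.trans (Fintype.card_fin d)))) hbd hylo hyhi
  rw [convexHull_eq] at hyhull
  obtain ⟨ι, t, w, z, h0, h1, hz, hyeq⟩ := hyhull
  have hzΞ : ∀ i ∈ t, z i ∈ Xi d := fun i hi =>
    subset_convexHull ℝ _ (Set.subset_union_right (hz i hi))
  have hcarrier : ∀ i ∈ t, w i ≠ 0 → z i ∈ segment ℝ u v := by
    apply extreme_carrier (convex_convexHull ℝ _) hext t w z h0 (by rw [h1]; norm_num) hzΞ
    rw [hyeq]; exact hy
  -- total sum identity
  have htot : ∑ i ∈ t, w i * (∑ j, z i j) = ∑ j, y j := by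
    have hyfun : y = ∑ i ∈ t, w i • z i := by
      rw [← hyeq, Finset.centerMass_eq_of_sum_1 _ _ h1]
    calc ∑ i ∈ t, w i * (∑ j, z i j) = ∑ i ∈ t, ∑ j, w i * z i j :=
          Finset.sum_congr rfl fun i _ => Finset.mul_sum _ _ _
      _ = ∑ j, ∑ i ∈ t, w i * z i j := Finset.sum_comm
      _ = ∑ j, y j := by
          refine Finset.sum_congr rfl fun j _ => ?_
          rw [hyfun]
          simp [Finset.sum_apply]
  -- sums of the support points all equal the sum of y
  have hsz : ∀ i ∈ t, w i ≠ 0 → ∑ j, z i j = ∑ j, y j := by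
    rcases hcase with hY | hY
    · intro i hi hwi
      have hterm : ∀ k ∈ t, 0 ≤ w k * (∑ j, z k j - (e:ℝ)) := by
        intro k hk
        have hzk := cube_slab_sum hde (hz k hk)
        have hge : (e:ℝ) ≤ ∑ j, z k j := by rcases hzk with h | h <;> rw [h] <;> linarith
        exact mul_nonneg (h0 k hk) (by linarith)
      have hzero : ∑ k ∈ t, w k * (∑ j, z k j - (e:ℝ)) = 0 := by
        have expand : ∑ k ∈ t, w k * (∑ j, z k j - (e:ℝ))
            = (∑ k ∈ t, w k * ∑ j, z k j) - (∑ k ∈ t, w k) * (e:ℝ) := by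
          rw [Finset.sum_mul, ← Finset.sum_sub_distrib]
          exact Finset.sum_congr rfl fun k _ => by ring
        rw [expand, htot, h1, hY]; ring
      have hk0 := (Finset.sum_eq_zero_iff_of_nonneg hterm).1 hzero i hi
      rcases mul_eq_zero.1 hk0 with h | h
      · exact absurd h hwi
      · rw [hY]; linarith [sub_eq_zero.1 h]
    · intro i hi hwi
      have hterm : ∀ k ∈ t, 0 ≤ w k * ((e:ℝ) + 1 - ∑ j, z k j) := by
        intro k hk
        have hzk := cube_slab_sum hde (hz k hk)
        have hge : ∑ j, z k j ≤ (e:ℝ) + 1 := by rcases hzk with h | h <;> rw [h] <;> linarith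
        exact mul_nonneg (h0 k hk) (by linarith)
      have hzero : ∑ k ∈ t, w k * ((e:ℝ) + 1 - ∑ j, z k j) = 0 := by
        have expand : ∑ k ∈ t, w k * ((e:ℝ) + 1 - ∑ j, z k j)
            = (∑ k ∈ t, w k) * ((e:ℝ) + 1) - (∑ k ∈ t, w k * ∑ j, z k j) := by
          rw [Finset.sum_mul, ← Finset.sum_sub_distrib]
          exact Finset.sum_congr rfl fun k _ => by ring
        rw [expand, htot, h1, hY]; ring
      have hk0 := (Finset.sum_eq_zero_iff_of_nonneg hterm).1 hzero i hi
      rcases mul_eq_zero.1 hk0 with h | h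
      · exact absurd h hwi
      · rw [hY]; linarith [sub_eq_zero.1 h]
  obtain ⟨i, hi, hwi⟩ : ∃ i ∈ t, w i ≠ 0 := by
    by_contra h
    push_neg at h
    rw [Finset.sum_eq_zero h] at h1
    norm_num at h1
  have hzy : z i = y := huniq (z i) (hcarrier i hi hwi) (hsz i hi hwi)
  rw [← hzy]
  exact (hz i hi).1


lemma forward_aux {e : ℕ} (hd : 3 ≤ d) (hde : d = 2 * e + 1)
    {u v : Fin d → ℝ} (hu : u ∈ vSet d) (hv : v ∈ vSet d)
    (hext : IsExtreme ℝ (Xi d) (segment ℝ u v))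
    (hus : ∑ i, u i ≤ (e : ℝ)) (hvs : (e : ℝ) + 1 ≤ ∑ i, v i) :
    (∀ i, u i = 0 ∨ u i = 1) ∧ (∀ i, v i = 0 ∨ v i = 1) ∧
      {i | u i ≠ v i}.ncard = 1 ∧ ∑ i, u i = (e : ℝ) ∧ ∑ i, v i = (e : ℝ) + 1 := by
  classical
  have he1 : 1 ≤ e := by omega
  -- Step 1a : u is a cube vertex at level e
  have hcu : (∀ i, u i = 0 ∨ u i = 1) ∧ ∑ i, u i = (e : ℝ) := by
    rcases hu with ⟨hc, hnL⟩ | hL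
    · exfalso
      have hsu_lt : ∑ i, u i < (e : ℝ) := by
        by_contra h
        push_neg at h
        exact hnL ⟨by rw [cast_lo hde]; exact h, by rw [cast_hi hde]; linarith⟩
      have hden : (0:ℝ) < ∑ i, v i - ∑ i, u i := by linarith
      have hD := hden.ne'
      set t : ℝ := ((e : ℝ) - ∑ i, u i) / (∑ i, v i - ∑ i, u i) with ht
      have ht0 : 0 < t := div_pos (by linarith) hden
      have ht1 : t < 1 := by rw [ht, div_lt_one hden]; linarith
      set y := (1 - t) • u + t • v with hy
      have hyseg : y ∈ segment ℝ u v := ⟨1 - t, t, by linarith, le_of_lt ht0, by ring, rfl⟩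
      have hysum : ∑ i, y i = (e : ℝ) := by
        rw [hy, sum_smul_add, ht]
        field_simp
        ring
      have huniq : ∀ z ∈ segment ℝ u v, ∑ i, z i = ∑ i, y i → z = y := by
        intro z hz hzs
        obtain ⟨a, b, ha, hb, hab, hzeq⟩ := hz
        have hzsum : a * ∑ i, u i + b * ∑ i, v i = (e : ℝ) := by
          rw [← sum_smul_add, hzeq, hzs, hysum]
        have hbt : b = t := by
          rw [ht, eq_div_iff hD]
          linear_combination hzsum - (∑ i, u i) * hab
        rw [← hzeq, hy, hbt, show a = 1 - t by rw [← hbt]; linarith]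
      have hyvert := level_point_is_vertex hde hext hyseg huniq (Or.inl hysum)
      have hcd : (d - 1) / 2 = e := by omega
      have hne : {i | u i = 1/2}.Nonempty := by
        apply Set.nonempty_of_ncard_ne_zero
        rw [hc.2, hcd]
        omega
      obtain ⟨i, hi⟩ := hne
      have hi' : u i = 1/2 := hi
      have hyi : y i = (1 - t) * (1/2) + t * v i := by
        rw [hy]
        simp only [Pi.add_apply, Pi.smul_apply, smul_eq_mul, hi']
      have hv0 := (vSet_bounds hv i).1
      have hv1 := (vSet_bounds hv i).2
      have haux1 : 0 ≤ t * v i := mul_nonneg (le_of_lt ht0) hv0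
      have haux2 : t * v i ≤ t := by nlinarith
      rcases hyvert i with h | h <;> rw [hyi] at h <;> linarith
    · refine ⟨hL.1, le_antisymm hus ?_⟩
      rw [← cast_lo hde]
      exact hL.2.1
  -- Step 1b : v is a cube vertex at level e+1
  have hcv : (∀ i, v i = 0 ∨ v i = 1) ∧ ∑ i, v i = (e : ℝ) + 1 := by
    rcases hv with ⟨hc, hnL⟩ | hL
    · exfalso
      have hsv_gt : (e : ℝ) + 1 < ∑ i, v i := by
        by_contra h
        push_neg at h
        exact hnL ⟨by rw [cast_lo hde]; linarith, by rw [cast_hi hde]; exact h⟩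
      have hden : (0:ℝ) < ∑ i, v i - ∑ i, u i := by linarith
      have hD := hden.ne'
      set t : ℝ := ((e : ℝ) + 1 - ∑ i, u i) / (∑ i, v i - ∑ i, u i) with ht
      have ht0 : 0 < t := div_pos (by linarith) hden
      have ht1 : t < 1 := by rw [ht, div_lt_one hden]; linarith
      set y := (1 - t) • u + t • v with hy
      have hyseg : y ∈ segment ℝ u v := ⟨1 - t, t, by linarith, le_of_lt ht0, by ring, rfl⟩
      have hysum : ∑ i, y i = (e : ℝ) + 1 := by
        rw [hy, sum_smul_add, ht]
        field_simp
        ring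
      have huniq : ∀ z ∈ segment ℝ u v, ∑ i, z i = ∑ i, y i → z = y := by
        intro z hz hzs
        obtain ⟨a, b, ha, hb, hab, hzeq⟩ := hz
        have hzsum : a * ∑ i, u i + b * ∑ i, v i = (e : ℝ) + 1 := by
          rw [← sum_smul_add, hzeq, hzs, hysum]
        have hbt : b = t := by
          rw [ht, eq_div_iff hD]
          linear_combination hzsum - (∑ i, u i) * hab
        rw [← hzeq, hy, hbt, show a = 1 - t by rw [← hbt]; linarith]
      have hyvert := level_point_is_vertex hde hext hyseg huniq (Or.inr hysum)
      have hcd : (d - 1) / 2 = e := by omega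
      have hne : {i | v i = 1/2}.Nonempty := by
        apply Set.nonempty_of_ncard_ne_zero
        rw [hc.2, hcd]
        omega
      obtain ⟨i, hi⟩ := hne
      have hi' : v i = 1/2 := hi
      have hyi : y i = (1 - t) * u i + t * (1/2) := by
        rw [hy]
        simp only [Pi.add_apply, Pi.smul_apply, smul_eq_mul, hi']
      have hu0 := (vSet_bounds hu i).1
      have hu1 := (vSet_bounds hu i).2
      have haux1 : 0 ≤ (1 - t) * u i := mul_nonneg (by linarith) hu0
      have haux2 : (1 - t) * u i ≤ 1 - t := by nlinarith
      rcases hyvert i with h | h <;> rw [hyi] at h <;> linarith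
    · refine ⟨hL.1, le_antisymm ?_ hvs⟩
      rw [← cast_hi hde]
      exact hL.2.2
  obtain ⟨hcu1, hcu2⟩ := hcu
  obtain ⟨hcv1, hcv2⟩ := hcv
  refine ⟨hcu1, hcv1, ?_, hcu2, hcv2⟩
  -- Step 2 : u and v differ in exactly one coordinate
  set A := Finset.univ.filter (fun i => u i = 1 ∧ v i = 0) with hA
  set B := Finset.univ.filter (fun i => u i = 0 ∧ v i = 1) with hB
  set D := Finset.univ.filter (fun i => u i ≠ v i) with hDdef
  have hD_union : D = A ∪ B := by
    rw [hDdef, hA, hB]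
    ext i
    simp only [Finset.mem_filter, Finset.mem_union, Finset.mem_univ, true_and]
    rcases hcu1 i with h | h <;> rcases hcv1 i with g | g <;> rw [h, g] <;> norm_num
  have hdisj : Disjoint A B := by
    rw [Finset.disjoint_left]
    intro i hiA hiB
    have h1 := (Finset.mem_filter.1 hiA).2.1
    have h2 := (Finset.mem_filter.1 hiB).2.1
    rw [h1] at h2
    norm_num at h2
  have hptw : ∀ i, v i - u i =
      (if u i = 0 ∧ v i = 1 then (1:ℝ) else 0) - (if u i = 1 ∧ v i = 0 then (1:ℝ) else 0) := by
    intro i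
    rcases hcu1 i with h | h <;> rcases hcv1 i with g | g <;> rw [h, g] <;> norm_num
  have hsum1 : ∑ i, (v i - u i) = 1 := by
    rw [Finset.sum_sub_distrib, hcv2, hcu2]
    ring
  have hsum2 : ∑ i, (v i - u i) = (B.card : ℝ) - (A.card : ℝ) := by
    rw [Finset.sum_congr rfl (fun i _ => hptw i), Finset.sum_sub_distrib,
      Finset.sum_boole, Finset.sum_boole, hA, hB]
  have hABnat : B.card = A.card + 1 := by
    have : (B.card : ℝ) = (A.card : ℝ) + 1 := by
      rw [hsum2] at hsum1
      linarith
    exact_mod_cast this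
  have hDcard : D.card = A.card + B.card := by
    rw [hD_union, Finset.card_union_of_disjoint hdisj]
  have hAzero : A.card = 0 := by
    by_contra hA0
    have hB2 : 1 < B.card := by omega
    obtain ⟨i, hiA⟩ := Finset.card_pos.1 (Nat.pos_of_ne_zero hA0)
    obtain ⟨j, k, hjB, hkB, hjk⟩ := Finset.one_lt_card_iff.1 hB2
    have hui : u i = 1 := (Finset.mem_filter.1 hiA).2.1
    have hvi : v i = 0 := (Finset.mem_filter.1 hiA).2.2
    have huj : u j = 0 := (Finset.mem_filter.1 hjB).2.1
    have hvj : v j = 1 := (Finset.mem_filter.1 hjB).2.2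
    have huk : u k = 0 := (Finset.mem_filter.1 hkB).2.1
    have hvk : v k = 1 := (Finset.mem_filter.1 hkB).2.2
    have hij : i ≠ j := by intro h; rw [h, huj] at hui; norm_num at hui
    have hik : k ≠ i := by intro h; rw [h, hui] at huk; norm_num at huk
    set m : Fin d → ℝ := fun s => (u s + v s) / 2 with hm
    set p : Fin d → ℝ := fun s => if s = i then (1:ℝ) else if s = j then 0 else m s with hp
    set q : Fin d → ℝ := fun s => if s = i then (0:ℝ) else if s = j then 1 else m s with hq
    have hm_i : m i = 1/2 := by rw [hm]; simp only; rw [hui, hvi]; norm_num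
    have hm_j : m j = 1/2 := by rw [hm]; simp only; rw [huj, hvj]; norm_num
    have hm_k : m k = 1/2 := by rw [hm]; simp only; rw [huk, hvk]; norm_num
    have hm_sum : ∑ s, m s = (e : ℝ) + 1/2 := by
      rw [hm]
      simp only
      rw [← Finset.sum_div, Finset.sum_add_distrib, hcu2, hcv2]
      ring
    have hm_bd : ∀ s, 0 ≤ m s ∧ m s ≤ 1 := by
      intro s
      rw [hm]
      simp only
      rcases hcu1 s with h | h <;> rcases hcv1 s with g | g <;> rw [h, g] <;> norm_num
    have hp_sum : ∑ s, p s = (e : ℝ) + 1/2 := by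
      rw [hp, sum_ite_two hij, hm_i, hm_j, hm_sum]
      ring
    have hq_sum : ∑ s, q s = (e : ℝ) + 1/2 := by
      rw [hq, sum_ite_two hij, hm_i, hm_j, hm_sum]
      ring
    have hp_bd : ∀ s, 0 ≤ p s ∧ p s ≤ 1 := by
      intro s
      rw [hp]
      simp only
      split_ifs
      · norm_num
      · norm_num
      · exact hm_bd s
    have hq_bd : ∀ s, 0 ≤ q s ∧ q s ≤ 1 := by
      intro s
      rw [hq]
      simp only
      split_ifs
      · norm_num
      · norm_num
      · exact hm_bd s
    have hcard_le : ∀ x : Fin d → ℝ,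
        (Finset.univ.filter fun s => x s ≠ 0 ∧ x s ≠ 1).card ≤ d :=
      fun x => le_trans (Finset.card_filter_le _ _)
        (le_of_eq (Finset.card_univ.trans (Fintype.card_fin d)))
    have hpΞ : p ∈ Xi d := cube_slab_subset_Xi
      (mem_slab_hull_aux hde d p (hcard_le p) hp_bd (by rw [hp_sum]; linarith)
        (by rw [hp_sum]; linarith))
    have hqΞ : q ∈ Xi d := cube_slab_subset_Xi
      (mem_slab_hull_aux hde d q (hcard_le q) hq_bd (by rw [hq_sum]; linarith)
        (by rw [hq_sum]; linarith))
    have hm_seg : m ∈ segment ℝ u v := by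
      refine ⟨1/2, 1/2, by norm_num, by norm_num, by norm_num, ?_⟩
      funext s
      simp only [Pi.add_apply, Pi.smul_apply, smul_eq_mul, hm]
      ring
    have hm_open : m ∈ openSegment ℝ p q := by
      refine ⟨1/2, 1/2, by norm_num, by norm_num, by norm_num, ?_⟩
      funext s
      simp only [Pi.add_apply, Pi.smul_apply, smul_eq_mul, hp, hq]
      split_ifs with h1 h2
      · rw [h1, hm_i]; norm_num
      · rw [h2, hm_j]; norm_num
      · ring
    have hps := hext.left_mem_of_mem_openSegment hpΞ hqΞ hm_seg hm_open
    obtain ⟨a, b, ha, hb, hab, hpeq⟩ := hps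
    have hcoord_i := congrFun hpeq i
    simp only [Pi.add_apply, Pi.smul_apply, smul_eq_mul] at hcoord_i
    rw [hui, hvi] at hcoord_i
    have hp_i : p i = 1 := by rw [hp]; simp
    rw [hp_i] at hcoord_i
    have ha1 : a = 1 := by linarith
    have hb0 : b = 0 := by linarith
    have hcoord_k := congrFun hpeq k
    simp only [Pi.add_apply, Pi.smul_apply, smul_eq_mul] at hcoord_k
    rw [huk, hvk, ha1, hb0] at hcoord_k
    have hp_k : p k = 1/2 := by
      rw [hp]; simp only [if_neg hik, if_neg hjk.symm]; exact hm_k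
    rw [hp_k] at hcoord_k
    norm_num at hcoord_k
  have hset : {i | u i ≠ v i} = ↑D := by
    ext i
    simp [hDdef]
  rw [hset, Set.ncard_coe_finset]
  omega

lemma backward_aux {e : ℕ} (hd : 3 ≤ d) (hde : d = 2 * e + 1)
    {u v : Fin d → ℝ}
    (hcu : ∀ i, u i = 0 ∨ u i = 1) (hcv : ∀ i, v i = 0 ∨ v i = 1)
    (hsu : ∑ i, u i = (e : ℝ)) (hsv : ∑ i, v i = (e : ℝ) + 1)
    (hn : {i | u i ≠ v i}.ncard = 1) :
    IsExtreme ℝ (Xi d) (segment ℝ u v) := by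
  classical
  have he1 : 1 ≤ e := by omega
  obtain ⟨i₀, hD⟩ := Set.ncard_eq_one.1 hn
  have hoff : ∀ i, i ≠ i₀ → u i = v i := by
    intro i hi
    by_contra h
    have : i ∈ ({i₀} : Set (Fin d)) := hD ▸ h
    exact hi this
  have hdiff : v i₀ - u i₀ = 1 := by
    have : ∑ i, (v i - u i) = v i₀ - u i₀ := by
      rw [Finset.sum_eq_single i₀]
      · intro b _ hb
        rw [hoff b hb]
        ring
      · intro h
        exact absurd (Finset.mem_univ i₀) h
    rw [Finset.sum_sub_distrib, hsv, hsu] at this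
    linarith
  have hui₀ : u i₀ = 0 := by
    rcases hcu i₀ with h | h
    · exact h
    · rcases hcv i₀ with g | g <;> rw [h, g] at hdiff <;> norm_num at hdiff
  have hvi₀ : v i₀ = 1 := by
    rcases hcv i₀ with h | h
    · rw [h, hui₀] at hdiff; norm_num at hdiff
    · exact h
  have huV : u ∈ vSet d :=
    Or.inr ⟨hcu, by rw [cast_lo hde, hsu], by rw [cast_hi hde, hsu]; linarith⟩
  have hvV : v ∈ vSet d :=
    Or.inr ⟨hcv, by rw [cast_lo hde, hsv]; linarith, by rw [cast_hi hde, hsv]⟩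
  have huΞ : u ∈ Xi d := subset_convexHull ℝ _ huV
  have hvΞ : v ∈ Xi d := subset_convexHull ℝ _ hvV
  -- the supporting functional
  set a : Fin d → ℝ := fun i => if u i = 1 then 1 else if i = i₀ then 0 else -1 with ha
  set flin : (Fin d → ℝ) →ₗ[ℝ] ℝ := ∑ i, a i • (LinearMap.proj i) with hflin
  have feval : ∀ x : Fin d → ℝ, flin x = ∑ i, a i * x i := by
    intro x
    rw [hflin]
    simp [LinearMap.proj_apply]
  have hsum_ind : ∑ i, (if u i = 1 then (1:ℝ) else 0) = (e : ℝ) := by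
    rw [← hsu]
    refine Finset.sum_congr rfl fun i _ => ?_
    rcases hcu i with h | h <;> rw [h] <;> norm_num
  have hbound : ∀ w ∈ vSet d, flin w ≤ (e : ℝ) := by
    intro w hw
    rw [feval, ← hsum_ind]
    refine Finset.sum_le_sum fun i _ => ?_
    have hw0 := (vSet_bounds hw i).1
    have hw1 := (vSet_bounds hw i).2
    rw [ha]
    simp only
    split_ifs with h1 h2
    · linarith
    · linarith
    · linarith
  have hflu : flin u = (e : ℝ) := by
    rw [feval, ← hsu]
    refine Finset.sum_congr rfl fun i _ => ?_
    rw [ha]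
    simp only
    rcases hcu i with h | h <;> rw [h] <;> norm_num
  have hflv : flin v = (e : ℝ) := by
    rw [feval]
    have hvterm : ∀ i, a i * v i = if i = i₀ then 0 else v i := by
      intro i
      by_cases hii : i = i₀
      · rw [if_pos hii, hii, ha]
        simp only
        rw [hui₀]
        norm_num
      · rw [if_neg hii, ha]
        simp only
        rw [← hoff i hii]
        rcases hcu i with h | h <;> rw [h] <;> norm_num
    rw [Finset.sum_congr rfl fun i _ => hvterm i, sum_ite_one i₀ 0 v, hsv, hvi₀]
    ring
  -- equality case: only u and v attain the maximum on 𝒱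
  have hargmax : ∀ w ∈ vSet d, flin w = (e : ℝ) → w = u ∨ w = v := by
    intro w hw hfw
    rw [feval] at hfw
    have hle : ∀ i ∈ Finset.univ, a i * w i ≤ (if u i = 1 then (1:ℝ) else 0) := by
      intro i _
      have hw0 := (vSet_bounds hw i).1
      have hw1 := (vSet_bounds hw i).2
      rw [ha]
      simp only
      split_ifs with h1 h2
      · linarith
      · linarith
      · linarith
    have hpt : ∀ i ∈ Finset.univ, a i * w i = (if u i = 1 then (1:ℝ) else 0) :=
      (Finset.sum_eq_sum_iff_of_le hle).1 (by rw [hfw, hsum_ind]) 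
    have hw_off : ∀ i, i ≠ i₀ → w i = u i := by
      intro i hii
      have h := hpt i (Finset.mem_univ i)
      rw [ha] at h
      simp only at h
      rcases hcu i with h0 | h1
      · rw [h0] at h ⊢
        rw [if_neg (by norm_num : (0:ℝ) ≠ 1), if_neg (by norm_num : (0:ℝ) ≠ 1), if_neg hii] at h
        linarith
      · rw [h1] at h ⊢
        rw [if_pos rfl, if_pos rfl] at h
        linarith
    rcases hw with ⟨hc, hnL⟩ | hL
    · -- w a center attaining the max : impossible
      exfalso
      have hhalf : {i | w i = 1/2} ⊆ {i₀} := by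
        intro i hi
        have hi' : w i = 1/2 := hi
        by_contra hii
        have := hw_off i hii
        rcases hcu i with h | h <;> rw [h, hi'] at this <;> norm_num at this
      have hcd : (d - 1) / 2 = e := by omega
      have hcard1 : {i | w i = 1/2}.ncard ≤ 1 := by
        calc {i | w i = 1/2}.ncard ≤ ({i₀} : Set (Fin d)).ncard :=
              Set.ncard_le_ncard hhalf (Set.finite_singleton i₀)
          _ = 1 := Set.ncard_singleton i₀
      have he1' : e = 1 := by
        have := hc.2
        rw [hcd] at this
        omega
      have hnonemp : {i | w i = 1/2}.Nonempty := by
        apply Set.nonempty_of_ncard_ne_zero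
        rw [hc.2, hcd, he1']
        omega
      obtain ⟨i₁, hi₁⟩ := hnonemp
      have hi₁' : i₁ = i₀ := hhalf hi₁
      have hwi₀ : w i₀ = 1/2 := by rw [← hi₁']; exact hi₁
      have hw_eq : ∀ i, w i = if i = i₀ then 1/2 else u i := by
        intro i
        by_cases h : i = i₀
        · rw [if_pos h, h]; exact hwi₀
        · rw [if_neg h]; exact hw_off i h
      have hwsum : ∑ i, w i = (e : ℝ) + 1/2 := by
        rw [Finset.sum_congr rfl fun i _ => hw_eq i, sum_ite_one i₀ (1/2) u, hsu, hui₀]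
        ring
      exact hnL ⟨by rw [cast_lo hde, hwsum]; linarith, by rw [cast_hi hde, hwsum]; linarith⟩
    · -- w a cube vertex : w = u or w = v
      rcases hL.1 i₀ with h | h
      · left
        funext i
        by_cases hii : i = i₀
        · rw [hii, h, hui₀]
        · exact hw_off i hii
      · right
        funext i
        by_cases hii : i = i₀
        · rw [hii, h, hvi₀]
        · rw [hw_off i hii, hoff i hii]
  -- the argmax set is exactly {u, v}
  have hXi_bound : ∀ x ∈ Xi d, flin x ≤ (e : ℝ) := by
    intro x hx
    have hsub : Xi d ⊆ {w | flin w ≤ (e : ℝ)} :=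
      convexHull_min hbound (convex_halfSpace_le (LinearMap.isLinear flin) _)
    exact hsub hx
  have hseg_sub : segment ℝ u v ⊆ Xi d :=
    (convex_convexHull ℝ _).segment_subset huΞ hvΞ
  have hface : ∀ x ∈ Xi d, flin x = (e : ℝ) → x ∈ segment ℝ u v := by
    intro x hx hfx
    have hs2 : {w ∈ vSet d | flin w = (e : ℝ)} = {u, v} := by
      ext w
      constructor
      · rintro ⟨hw, hfw⟩
        rcases hargmax w hw hfw with h | h
        · exact Or.inl h
        · exact Or.inr h
      · rintro (rfl | rfl)
        · exact ⟨huV, hflu⟩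
        · exact ⟨hvV, hflv⟩
    have := argmax_face flin (e : ℝ) hbound hx hfx
    rw [hs2, convexHull_pair] at this
    exact this
  -- conclude via exposedness
  have hexp : IsExposed ℝ (Xi d) (segment ℝ u v) := by
    intro _
    refine ⟨LinearMap.toContinuousLinearMap flin, ?_⟩
    ext x
    constructor
    · intro hxseg
      have hxΞ' := hseg_sub hxseg
      obtain ⟨c1, c2, hc1, hc2, hc12, hxeq⟩ := hxseg
      have hfx : flin x = (e : ℝ) := by
        rw [← hxeq, map_add, map_smul, map_smul, hflu, hflv, smul_eq_mul, smul_eq_mul]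
        nlinarith
      refine ⟨hxΞ', fun y hy => ?_⟩
      rw [LinearMap.coe_toContinuousLinearMap']
      rw [hfx]
      exact hXi_bound y hy
    · rintro ⟨hxΞ, hmax⟩
      have h1 := hmax u huΞ
      rw [LinearMap.coe_toContinuousLinearMap'] at h1
      rw [hflu] at h1
      exact hface x hxΞ (le_antisymm (hXi_bound x hxΞ) h1)
  exact hexp.isExtreme

end Main

/-- For `d ≥ 3` with both `d` and `(d-1)/2` odd, and distinct extreme points `u, v` of `Ξ`:
`[u,v]` is an extreme subset of `Ξ` whose relative interior meets the hyperplane `H_{d/2}`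
if and only if `u, v ∈ {0,1}^d`, `u` and `v` differ in exactly one coordinate, and their
coordinate sums are `(d-1)/2` and `(d+1)/2` in some order. -/
theorem crossing_edges_Xi (hd : 3 ≤ d) (hodd : Odd d) (hodd' : Odd ((d - 1) / 2))
    (u v : Fin d → ℝ) (hu : u ∈ Set.extremePoints ℝ (Xi d))
    (hv : v ∈ Set.extremePoints ℝ (Xi d)) (huv : u ≠ v) :
    (IsExtreme ℝ (Xi d) (segment ℝ u v) ∧
        ∃ x ∈ openSegment ℝ u v, ∑ i, x i = (d : ℝ) / 2) ↔
      ((∀ i, u i = 0 ∨ u i = 1) ∧ (∀ i, v i = 0 ∨ v i = 1) ∧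
        {i | u i ≠ v i}.ncard = 1 ∧
        ((∑ i, u i = ((d : ℝ) - 1) / 2 ∧ ∑ i, v i = ((d : ℝ) + 1) / 2) ∨
          (∑ i, u i = ((d : ℝ) + 1) / 2 ∧ ∑ i, v i = ((d : ℝ) - 1) / 2))) := by
  classical
  obtain ⟨e, hde⟩ : ∃ e, d = 2 * e + 1 := by
    obtain ⟨k, hk⟩ := hodd
    exact ⟨k, by omega⟩
  have hhalf := cast_half (d := d) hde
  constructor
  · rintro ⟨hext, x, hxopen, hxsum⟩
    have huV : u ∈ vSet d := extremePoints_convexHull_subset hu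
    have hvV : v ∈ vSet d := extremePoints_convexHull_subset hv
    obtain ⟨ca, cb, hca, hcb, hcab, hxeq⟩ := hxopen
    have hxs : ca * ∑ i, u i + cb * ∑ i, v i = (d : ℝ) / 2 := by
      rw [← hxsum, ← hxeq, sum_smul_add]
    rw [hhalf] at hxs
    have hmule : ca * (e:ℝ) + cb * (e:ℝ) = (e:ℝ) := by rw [← add_mul, hcab, one_mul]
    have hmule1 : ca * ((e:ℝ)+1) + cb * ((e:ℝ)+1) = (e:ℝ)+1 := by
      rw [← add_mul, hcab, one_mul]
    rcases vSet_levels hde huV with h1 | h1 <;> rcases vSet_levels hde hvV with h2 | h2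
    · exfalso
      have p1 : ca * ∑ i, u i ≤ ca * (e:ℝ) := mul_le_mul_of_nonneg_left h1 (le_of_lt hca)
      have p2 : cb * ∑ i, v i ≤ cb * (e:ℝ) := mul_le_mul_of_nonneg_left h2 (le_of_lt hcb)
      linarith
    · obtain ⟨hcu1, hcv1, hncard, hsu, hsv⟩ := forward_aux hd hde huV hvV hext h1 h2
      exact ⟨hcu1, hcv1, hncard,
        Or.inl ⟨by rw [cast_lo hde]; exact hsu, by rw [cast_hi hde]; exact hsv⟩⟩
    · have hext' : IsExtreme ℝ (Xi d) (segment ℝ v u) := by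
        rw [segment_symm]; exact hext
      obtain ⟨hcv1, hcu1, hncard, hsv, hsu⟩ := forward_aux hd hde hvV huV hext' h2 h1
      refine ⟨hcu1, hcv1, ?_,
        Or.inr ⟨by rw [cast_hi hde]; exact hsu, by rw [cast_lo hde]; exact hsv⟩⟩
      rw [show {i | u i ≠ v i} = {i | v i ≠ u i} from by ext i; exact ne_comm]
      exact hncard
    · exfalso
      have p1 : ca * ((e:ℝ)+1) ≤ ca * ∑ i, u i := mul_le_mul_of_nonneg_left h1 (le_of_lt hca)
      have p2 : cb * ((e:ℝ)+1) ≤ cb * ∑ i, v i := mul_le_mul_of_nonneg_left h2 (le_of_lt hcb)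
      linarith
  · rintro ⟨hcu1, hcv1, hncard, hsums | hsums⟩
    · have h1 : ∑ i, u i = (e : ℝ) := by rw [← cast_lo hde]; exact hsums.1
      have h2 : ∑ i, v i = (e : ℝ) + 1 := by rw [← cast_hi hde]; exact hsums.2
      refine ⟨backward_aux hd hde hcu1 hcv1 h1 h2 hncard, fun i => (u i + v i)/2, ?_, ?_⟩
      · exact ⟨1/2, 1/2, by norm_num, by norm_num, by norm_num,
          funext fun s => by simp only [Pi.add_apply, Pi.smul_apply, smul_eq_mul]; ring⟩
      · rw [← Finset.sum_div, Finset.sum_add_distrib, h1, h2, hhalf]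
        ring
    · have h1 : ∑ i, v i = (e : ℝ) := by rw [← cast_lo hde]; exact hsums.2
      have h2 : ∑ i, u i = (e : ℝ) + 1 := by rw [← cast_hi hde]; exact hsums.1
      have hncard' : {i | v i ≠ u i}.ncard = 1 := by
        rw [show {i | v i ≠ u i} = {i | u i ≠ v i} from by ext i; exact ne_comm]
        exact hncard
      have hextvu := backward_aux hd hde hcv1 hcu1 h1 h2 hncard'
      rw [segment_symm] at hextvu
      refine ⟨hextvu, fun i => (u i + v i)/2, ?_, ?_⟩
      · exact ⟨1/2, 1/2, by norm_num, by norm_num, by norm_num,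
          funext fun s => by simp only [Pi.add_apply, Pi.smul_apply, smul_eq_mul]; ring⟩
      · rw [← Finset.sum_div, Finset.sum_add_distrib, h1, h2, hhalf]
        ring
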